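/- Let n ∈ ℕ and let A be an n×n real matrix. For 1 ≤ k ≤ n−1 define the (n−k)×(n−k) matrix B_k indexed by i, j ∈ {k+1, …, n} with entries B_k(i,j) := det(A restricted to rows {1, …, k, i} and columns {1, …, k, j}). Then det(B_k) = (det(A restricted to rows and columns {1, …, k}))^{n−k−1} · det(A). -/

import Mathlib

open Matrix Polynomial

private lemma sylvester_aux {R : Type*} [CommRing R] (n k : ℕ) (hk1 : 1 ≤ k) (hkn : k + 1 ≤ n)
    (A : Matrix (Fin n) (Fin n) R)
    (hP : IsUnit (Matrix.det
        (A.submatrix (Fin.castLE (by omega : k + 0 ≤ n)) (Fin.castLE (by omega : k + 0 ≤ n))))) :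
    Matrix.det (Matrix.of fun i j : Fin (n - k) =>
      Matrix.det (A.submatrix
        (Fin.snoc (fun s : Fin k => Fin.castLE (by omega : k + 0 ≤ n) s)
          ⟨k + (i : ℕ), (by have := i.isLt; omega : k + (i : ℕ) + 0 < n)⟩)
        (Fin.snoc (fun s : Fin k => Fin.castLE (by omega : k + 0 ≤ n) s)
          ⟨k + (j : ℕ), (by have := j.isLt; omega : k + (j : ℕ) + 0 < n)⟩)))
    = Matrix.det
        (A.submatrix (Fin.castLE (by omega : k + 0 ≤ n)) (Fin.castLE (by omega : k + 0 ≤ n)))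
        ^ (n - k - 1) * Matrix.det A := by
  have hkn' : k ≤ n := by omega
  set f : Fin k → Fin n := Fin.castLE hkn' with hf
  set g : Fin (n - k) → Fin n := fun i => ⟨k + (i : ℕ), by have := i.isLt; omega⟩ with hg
  set P := A.submatrix f f with hPdef
  set Q := A.submatrix f g with hQdef
  set Rm := A.submatrix g f with hRdef
  set S := A.submatrix g g with hSdef
  haveI : Invertible P := P.invertibleOfIsUnitDet hP
  have hsnoc : ∀ i : Fin (n - k),
      (Fin.snoc (fun s : Fin k => Fin.castLE (by omega : k ≤ n) s)
        (⟨k + (i : ℕ), by have := i.isLt; omega⟩ : Fin n)) ∘ finSumFinEquiv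
      = Sum.elim f (fun _ : Fin 1 => g i) := by
    intro i
    funext x
    rcases x with s | s
    · simp only [Function.comp_apply, finSumFinEquiv_apply_left]
      rw [show Fin.castAdd 1 s = Fin.castSucc s from rfl, Fin.snoc_castSucc]
      rfl
    · simp only [Function.comp_apply, finSumFinEquiv_apply_right]
      rw [show Fin.natAdd k s = Fin.last k from by ext; simp, Fin.snoc_last]
      rfl
  -- Step A : the B matrix equals det P • (S - Rm * ⅟P * Q)
  have stepA : (Matrix.of fun i j : Fin (n - k) =>
      Matrix.det (A.submatrix
        (Fin.snoc (fun s : Fin k => Fin.castLE (by omega) s)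
          ⟨k + (i : ℕ), by have := i.isLt; omega⟩)
        (Fin.snoc (fun s : Fin k => Fin.castLE (by omega) s)
          ⟨k + (j : ℕ), by have := j.isLt; omega⟩)))
      = P.det • (S - Rm * ⅟P * Q) := by
    ext i j
    simp only [Matrix.of_apply]
    rw [← Matrix.det_submatrix_equiv_self (finSumFinEquiv : Fin k ⊕ Fin 1 ≃ Fin (k + 1)),
      Matrix.submatrix_submatrix, hsnoc i, hsnoc j]
    have hblocks : A.submatrix (Sum.elim f fun _ : Fin 1 => g i)
        (Sum.elim f fun _ : Fin 1 => g j)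
        = Matrix.fromBlocks P (A.submatrix f (fun _ : Fin 1 => g j))
            (A.submatrix (fun _ : Fin 1 => g i) f)
            (Matrix.of fun _ _ : Fin 1 => A (g i) (g j)) := by
      ext a b
      rcases a with a | a <;> rcases b with b | b <;> rfl
    rw [hblocks, Matrix.det_fromBlocks₁₁, Matrix.det_fin_one]
    simp only [Matrix.smul_apply, Matrix.sub_apply, Matrix.mul_apply, smul_eq_mul,
      Matrix.of_apply]
    rfl
  rw [stepA]
  -- Step B : det A via Schur complement
  have hA : Matrix.det A = P.det * Matrix.det (S - Rm * ⅟P * Q) := by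
    rw [← Matrix.det_submatrix_equiv_self
      ((finSumFinEquiv.trans (finCongr (by omega))) : Fin k ⊕ Fin (n - k) ≃ Fin n) A]
    have h1 : ∀ s : Fin k, (finSumFinEquiv.trans (finCongr (by omega : k + (n - k) = n))) (Sum.inl s) = f s := by
      intro s; ext
      simp [hf]
    have h2 : ∀ s : Fin (n - k), (finSumFinEquiv.trans (finCongr (by omega : k + (n - k) = n))) (Sum.inr s) = g s := by
      intro s; ext
      simp [hg]
    have : A.submatrix (finSumFinEquiv.trans (finCongr (by omega : k + (n - k) = n)))
        (finSumFinEquiv.trans (finCongr (by omega : k + (n - k) = n)))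
        = Matrix.fromBlocks P Q Rm S := by
      ext a b
      rcases a with a | a <;> rcases b with b | b <;>
        simp only [Matrix.submatrix_apply, h1, h2, Matrix.fromBlocks_apply₁₁,
          Matrix.fromBlocks_apply₁₂, Matrix.fromBlocks_apply₂₁, Matrix.fromBlocks_apply₂₂,
          hPdef, hQdef, hRdef, hSdef]
    rw [this, Matrix.det_fromBlocks₁₁]
  rw [Matrix.det_smul, hA, Fintype.card_fin, ← mul_assoc, ← pow_succ]
  congr 2
  omega

private lemma sylvester_lhs_map {R S : Type*} [CommRing R] [CommRing S] (φ : R →+* S)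
    (n k : ℕ) (hkn : k + 1 ≤ n) (A : Matrix (Fin n) (Fin n) R) :
    Matrix.det (Matrix.of fun i j : Fin (n - k) =>
      Matrix.det ((A.map φ).submatrix
        (Fin.snoc (fun s : Fin k => Fin.castLE (by omega : k + 0 ≤ n) s)
          ⟨k + (i : ℕ), (by have := i.isLt; omega : k + (i : ℕ) + 0 < n)⟩)
        (Fin.snoc (fun s : Fin k => Fin.castLE (by omega : k + 0 ≤ n) s)
          ⟨k + (j : ℕ), (by have := j.isLt; omega : k + (j : ℕ) + 0 < n)⟩)))
    = φ (Matrix.det (Matrix.of fun i j : Fin (n - k) =>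
      Matrix.det (A.submatrix
        (Fin.snoc (fun s : Fin k => Fin.castLE (by omega : k + 0 ≤ n) s)
          ⟨k + (i : ℕ), (by have := i.isLt; omega : k + (i : ℕ) + 0 < n)⟩)
        (Fin.snoc (fun s : Fin k => Fin.castLE (by omega : k + 0 ≤ n) s)
          ⟨k + (j : ℕ), (by have := j.isLt; omega : k + (j : ℕ) + 0 < n)⟩)))) := by
  rw [RingHom.map_det]
  congr 1
  ext i j
  simp only [Matrix.of_apply, Matrix.map_apply, RingHom.mapMatrix_apply]
  rw [RingHom.map_det]
  rfl

private lemma sylvester_rhs_map {R S : Type*} [CommRing R] [CommRing S] (φ : R →+* S)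
    (n k : ℕ) (hkn : k + 1 ≤ n) (A : Matrix (Fin n) (Fin n) R) :
    Matrix.det
        ((A.map φ).submatrix (Fin.castLE (by omega : k + 0 ≤ n)) (Fin.castLE (by omega : k + 0 ≤ n)))
        ^ (n - k - 1) * Matrix.det (A.map φ)
    = φ (Matrix.det
        (A.submatrix (Fin.castLE (by omega : k + 0 ≤ n)) (Fin.castLE (by omega : k + 0 ≤ n)))
        ^ (n - k - 1) * Matrix.det A) := by
  rw [_root_.map_mul, _root_.map_pow, RingHom.map_det, RingHom.map_det]
  rfl


/-- Sylvester's Determinant Identity. For an `n × n` real matrix `A` and `1 ≤ k ≤ n - 1`,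
the matrix `B_k` indexed by `i, j ∈ {k+1,…,n}` with entries
`B_k(i,j) = det(A` restricted to rows `{1,…,k,i}` and columns `{1,…,k,j})` satisfies
`det B_k = (det(A restricted to rows and columns {1,…,k}))^(n-k-1) * det A`. -/
theorem sylvester_determinant_identity (n k : ℕ) (hk1 : 1 ≤ k) (hkn : k + 1 ≤ n)
    (A : Matrix (Fin n) (Fin n) ℝ) :
    Matrix.det (Matrix.of fun i j : Fin (n - k) =>
      Matrix.det (A.submatrix
        (Fin.snoc (fun s : Fin k => Fin.castLE (by omega) s)
          ⟨k + (i : ℕ), by have := i.isLt; omega⟩)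
        (Fin.snoc (fun s : Fin k => Fin.castLE (by omega) s)
          ⟨k + (j : ℕ), by have := j.isLt; omega⟩)))
    = Matrix.det
        (A.submatrix (Fin.castLE (by omega : k ≤ n)) (Fin.castLE (by omega : k ≤ n)))
        ^ (n - k - 1) * Matrix.det A := by
  classical
  have hkn' : k ≤ n := by omega
  set K := FractionRing (Polynomial ℝ) with hK
  let φ : Polynomial ℝ →+* K := algebraMap (Polynomial ℝ) K
  have hφ : Function.Injective φ := IsFractionRing.injective (Polynomial ℝ) K
  set M : Matrix (Fin n) (Fin n) (Polynomial ℝ) :=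
    (Polynomial.X : Polynomial ℝ) • (1 : Matrix (Fin n) (Fin n) (Polynomial ℝ)) + A.map Polynomial.C with hM
  have hch : M.submatrix (Fin.castLE hkn') (Fin.castLE hkn') =
      charmatrix (-(A.submatrix (Fin.castLE hkn') (Fin.castLE hkn'))) := by
    ext i j
    by_cases h : i = j
    · subst h
      simp [hM, Matrix.add_apply, Matrix.smul_apply, Matrix.one_apply, Matrix.map_apply,
        charmatrix_apply_eq, Matrix.neg_apply, map_neg, sub_neg_eq_add]
    · simp [hM, Matrix.add_apply, Matrix.smul_apply, Matrix.one_apply, Matrix.map_apply,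
        charmatrix_apply_ne _ _ _ h, Matrix.neg_apply, map_neg, h,
        Fin.castLE_inj]
  have hMP : (M.submatrix (Fin.castLE hkn') (Fin.castLE hkn')).det ≠ 0 := by
    rw [hch]
    have := (Matrix.charpoly_monic (-(A.submatrix (Fin.castLE hkn') (Fin.castLE hkn')))).ne_zero
    simpa [Matrix.charpoly] using this
  have hPunit : IsUnit (Matrix.det
      ((M.map φ).submatrix (Fin.castLE (by omega : k ≤ n)) (Fin.castLE (by omega : k ≤ n)))) := by
    have h0 : ((M.map φ).submatrix (Fin.castLE hkn') (Fin.castLE hkn'))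
        = φ.mapMatrix (M.submatrix (Fin.castLE hkn') (Fin.castLE hkn')) := rfl
    rw [h0, ← RingHom.map_det]
    exact isUnit_iff_ne_zero.mpr ((map_ne_zero_iff φ hφ).mpr hMP)
  have h1 := sylvester_aux n k hk1 hkn (M.map φ) hPunit
  rw [sylvester_lhs_map φ n k hkn M, sylvester_rhs_map φ n k hkn M] at h1
  have h2 := hφ h1
  have e1 := sylvester_lhs_map (Polynomial.evalRingHom (0:ℝ)) n k hkn M
  have e2 := sylvester_rhs_map (Polynomial.evalRingHom (0:ℝ)) n k hkn M
  have hMA : M.map (Polynomial.evalRingHom (0:ℝ)) = A := by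
    ext i j
    by_cases h : i = j <;>
      simp [hM, Matrix.add_apply, Matrix.smul_apply, Matrix.one_apply, Matrix.map_apply, h]
  rw [hMA] at e1 e2
  rw [e1, h2]
  exact e2.symm
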